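/- Let F be a finite field with q elements, a ∈ F nonzero, and n = 2m+1 with m ≥ 1. Writing g(ℓ) = ∏_{i=0}^{ℓ−1}(q^ℓ − q^i) for the order of GL(ℓ,F), the number of n×n matrices X over F satisfying X² = a•X equals 2 + Σ_{k=1}^{m} 2·g(2m+1)/(g(2m−k+1)·g(k)), where each of the displayed quotients is an integer (it is the index of a centralizer, hence an orbit size). -/

import Mathlib

set_option linter.unusedSectionVars false
set_option maxHeartbeats 1600000

/-- `glOrder q ℓ = ∏_{i=0}^{ℓ-1} (q^ℓ - q^i)`, the order of `GL(ℓ, F_q)`. -/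
def glOrder (q ℓ : ℕ) : ℕ := ∏ i ∈ Finset.range ℓ, (q ^ ℓ - q ^ i)

namespace Stmt10Aux

open Matrix MulAction

variable {F : Type*} [Field F] [Fintype F] {n : ℕ}

noncomputable def Ek (F : Type*) [Field F] (n k : ℕ) : Matrix (Fin n) (Fin n) F :=
  Matrix.diagonal (fun i => if (i : ℕ) < k then 1 else 0)

theorem card_lt (k : ℕ) (hk : k ≤ n) :
    (Finset.univ.filter (fun i : Fin n => (i:ℕ) < k)).card = k := by
  classical
  rw [show Finset.univ.filter (fun i : Fin n => (i:ℕ) < k)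
      = Finset.univ.map (Fin.castLEEmb hk) from ?_]
  · simp
  · ext i; simp [Fin.castLEEmb, Fin.castLE, Finset.mem_map]
    constructor
    · intro h; exact ⟨⟨i, h⟩, Fin.ext rfl⟩
    · rintro ⟨j, rfl⟩; exact j.2

theorem rank_Ek (k : ℕ) (hk : k ≤ n) : (Ek F n k).rank = k := by
  classical
  rw [Ek, Matrix.rank_diagonal, Fintype.card_subtype]
  rw [show (Finset.univ.filter fun i : Fin n => (if (i:ℕ) < k then (1:F) else 0) ≠ 0)
      = Finset.univ.filter (fun i : Fin n => (i:ℕ) < k) from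
    Finset.filter_congr (by intro i _; split <;> simp_all)]
  exact card_lt k hk

theorem idem_conj (P : Matrix (Fin n) (Fin n) F) (hP : P * P = P) :
    ∃ (k : ℕ) (_ : k ≤ n) (u : (Matrix (Fin n) (Fin n) F)ˣ),
      P = (u : Matrix (Fin n) (Fin n) F) * Ek F n k * ((u⁻¹ : _) : Matrix (Fin n) (Fin n) F) := by
  classical
  set f : (Fin n → F) →ₗ[F] (Fin n → F) := Matrix.toLin' P with hf
  have hff : f ∘ₗ f = f := by
    rw [hf, ← Matrix.toLin'_mul, hP]
  have hfx : ∀ x ∈ LinearMap.range f, f x = x := by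
    rintro x ⟨y, rfl⟩
    simpa using LinearMap.congr_fun hff y
  have hcompl : IsCompl (LinearMap.range f) (LinearMap.ker f) := by
    constructor
    · rw [disjoint_iff_inf_le]
      rintro x ⟨hx1, hx2⟩
      have := hfx x hx1
      rw [LinearMap.mem_ker.mp hx2] at this
      simp [← this]
    · rw [codisjoint_iff_le_sup]
      intro x _
      have : x = f x + (x - f x) := by ring
      rw [this]
      exact Submodule.add_mem_sup (LinearMap.mem_range_self f x)
        (by simp [LinearMap.mem_ker, ← LinearMap.comp_apply, hff])
  set k := Module.finrank F (LinearMap.range f) with hk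
  have hkn : k + Module.finrank F (LinearMap.ker f) = n := by
    rw [hk, LinearMap.finrank_range_add_finrank_ker]
    simp
  have hkle : k ≤ n := le_of_add_le_left hkn.le
  have hker : Module.finrank F (LinearMap.ker f) = n - k := by omega
  let b1 : Module.Basis (Fin k) F (LinearMap.range f) := Module.finBasisOfFinrankEq F _ rfl
  let b2 : Module.Basis (Fin (n - k)) F (LinearMap.ker f) := Module.finBasisOfFinrankEq F _ hker
  let e : Fin k ⊕ Fin (n - k) ≃ Fin n := finSumFinEquiv.trans (finCongr (by omega))
  let b : Module.Basis (Fin n) F (Fin n → F) :=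
    ((b1.prod b2).map (Submodule.prodEquivOfIsCompl _ _ hcompl)).reindex e
  have hbv : ∀ j : Fin n, f (b j) = if (j : ℕ) < k then b j else 0 := by
    intro j
    rcases h : e.symm j with i | i
    · have hj : (j : ℕ) = (i : ℕ) := by
        have : j = e (Sum.inl i) := by rw [← h, Equiv.apply_symm_apply]
        simp [this, e]
      have hb : b j = ↑(b1 i) := by
        simp only [b, Module.Basis.reindex_apply, h, Module.Basis.map_apply, Module.Basis.prod_apply]
        simp [Submodule.coe_prodEquivOfIsCompl']
      rw [if_pos (hj ▸ i.2), hb]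
      exact hfx _ (b1 i).2
    · have hj : (j : ℕ) = k + (i : ℕ) := by
        have : j = e (Sum.inr i) := by rw [← h, Equiv.apply_symm_apply]
        simp [this, e]
      have hb : b j = ↑(b2 i) := by
        simp only [b, Module.Basis.reindex_apply, h, Module.Basis.map_apply, Module.Basis.prod_apply]
        simp [Submodule.coe_prodEquivOfIsCompl']
      rw [if_neg (by omega), hb]
      exact LinearMap.mem_ker.mp (b2 i).2
  have hM : LinearMap.toMatrix b b f = Ek F n k := by
    ext i j
    rw [LinearMap.toMatrix_apply, hbv j, Ek, Matrix.diagonal_apply]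
    by_cases hjk : (j : ℕ) < k
    · rw [if_pos hjk, b.repr_self_apply]
      by_cases hij : i = j
      · subst hij; simp [hjk]
      · simp [hij, Ne.symm hij]
    · rw [if_neg hjk]
      by_cases hij : i = j
      · subst hij; simp [hjk]
      · simp [hij]
  refine ⟨k, hkle, ?_⟩
  let s : Module.Basis (Fin n) F (Fin n → F) := Pi.basisFun F (Fin n)
  refine ⟨⟨s.toMatrix b, b.toMatrix s, Module.Basis.toMatrix_mul_toMatrix_flip _ _,
    Module.Basis.toMatrix_mul_toMatrix_flip _ _⟩, ?_⟩
  have := basis_toMatrix_mul_linearMap_toMatrix_mul_basis_toMatrix s b s b f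
  rw [hM] at this
  rw [show (P : Matrix (Fin n) (Fin n) F) = LinearMap.toMatrix s s f from ?_]
  · exact this.symm
  · rw [show LinearMap.toMatrix s s f = LinearMap.toMatrix' f from rfl, hf]
    simp

theorem Ek_eq_reindex (k : ℕ) (hk : k ≤ n) :
    Ek F n k = Matrix.reindexAlgEquiv F F (finSumFinEquiv.trans (finCongr (by omega) :
      Fin (k + (n - k)) ≃ Fin n)) (Matrix.fromBlocks 1 0 0 0) := by
  classical
  set e : Fin k ⊕ Fin (n - k) ≃ Fin n := finSumFinEquiv.trans (finCongr (by omega))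
  ext i j
  rw [Matrix.reindexAlgEquiv_apply, Matrix.reindex_apply, Matrix.submatrix_apply]
  have hv : ∀ x : Fin k ⊕ Fin (n - k), ((e x : Fin n) : ℕ) =
      Sum.elim (fun a : Fin k => (a:ℕ)) (fun a : Fin (n-k) => k + a) x := by
    rintro (a | a) <;> simp [e]
  obtain ⟨x, rfl⟩ : ∃ x, i = e x := ⟨e.symm i, (e.apply_symm_apply i).symm⟩
  obtain ⟨y, rfl⟩ : ∃ y, j = e y := ⟨e.symm j, (e.apply_symm_apply j).symm⟩
  rw [Ek, Matrix.diagonal_apply]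
  simp only [Equiv.symm_apply_apply]
  rcases x with a | a <;> rcases y with c | c
  · rw [Matrix.fromBlocks_apply₁₁]
    by_cases hac : a = c
    · subst hac
      rw [if_pos rfl, if_pos (by rw [hv]; simpa using a.2)]
      simp [Matrix.one_apply]
    · rw [if_neg (fun h => hac (Sum.inl_injective (e.injective h)))]
      simp [Matrix.one_apply, hac]
  · rw [if_neg (fun h => by simpa using e.injective h)]; simp
  · rw [if_neg (fun h => by simpa using e.injective h)]; simp
  · rw [Matrix.fromBlocks_apply₂₂]
    by_cases hac : a = c
    · subst hac; rw [if_pos rfl, if_neg (by rw [hv]; simp)]; simp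
    · rw [if_neg (fun h => hac (Sum.inr_injective (e.injective h)))]; simp [hac]

noncomputable def blockUnit (k : ℕ) (hk : k ≤ n)
    (A : GL (Fin k) F) (D : GL (Fin (n - k)) F) : (Matrix (Fin n) (Fin n) F)ˣ where
  val := Matrix.reindexAlgEquiv F F (finSumFinEquiv.trans (finCongr (by omega) :
      Fin (k + (n - k)) ≃ Fin n)) (Matrix.fromBlocks A.val 0 0 D.val)
  inv := Matrix.reindexAlgEquiv F F (finSumFinEquiv.trans (finCongr (by omega) :
      Fin (k + (n - k)) ≃ Fin n)) (Matrix.fromBlocks A.inv 0 0 D.inv)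
  val_inv := by
    rw [← _root_.map_mul, Matrix.fromBlocks_multiply]
    simp only [Matrix.mul_zero, Matrix.zero_mul, add_zero, zero_add]
    rw [A.val_inv, D.val_inv, Matrix.fromBlocks_one, _root_.map_one]
  inv_val := by
    rw [← _root_.map_mul, Matrix.fromBlocks_multiply]
    simp only [Matrix.mul_zero, Matrix.zero_mul, add_zero, zero_add]
    rw [A.inv_val, D.inv_val, Matrix.fromBlocks_one, _root_.map_one]

theorem blockUnit_mem_stab (k : ℕ) (hk : k ≤ n) (A : GL (Fin k) F) (D : GL (Fin (n - k)) F) :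
    ConjAct.toConjAct (blockUnit k hk A D) ∈
      stabilizer (ConjAct (Matrix (Fin n) (Fin n) F)ˣ) (Ek F n k) := by
  rw [MulAction.mem_stabilizer_iff, ConjAct.units_smul_def, ConjAct.ofConjAct_toConjAct,
    Units.mul_inv_eq_iff_eq_mul]
  show (blockUnit k hk A D).val * Ek F n k = Ek F n k * (blockUnit k hk A D).val
  rw [Ek_eq_reindex k hk, blockUnit, ← _root_.map_mul, ← _root_.map_mul,
    Matrix.fromBlocks_multiply, Matrix.fromBlocks_multiply]
  simp

theorem card_stab (k : ℕ) (hk : k ≤ n) :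
    Nat.card (stabilizer (ConjAct (Matrix (Fin n) (Fin n) F)ˣ) (Ek F n k)) =
      Nat.card (GL (Fin k) F) * Nat.card (GL (Fin (n - k)) F) := by
  classical
  set e : Fin k ⊕ Fin (n - k) ≃ Fin n := finSumFinEquiv.trans (finCongr (by omega)) with he
  set re := Matrix.reindexAlgEquiv F F e with hre
  rw [← Nat.card_prod]
  refine (Nat.card_eq_of_bijective
    (fun p => ⟨ConjAct.toConjAct (blockUnit k hk p.1 p.2), blockUnit_mem_stab k hk p.1 p.2⟩)
    ⟨?_, ?_⟩).symm
  · rintro ⟨A, D⟩ ⟨A', D'⟩ h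
    have h1 : (blockUnit k hk A D).val = (blockUnit k hk A' D').val := by
      have := congrArg (fun x => (ConjAct.ofConjAct x.val).val) h
      simpa [ConjAct.ofConjAct_toConjAct] using this
    rw [blockUnit, blockUnit] at h1
    have h2 := re.injective h1
    have hA : A.val = A'.val := by
      have := congrArg Matrix.toBlocks₁₁ h2
      simpa [Matrix.toBlocks_fromBlocks₁₁] using this
    have hD : D.val = D'.val := by
      have := congrArg Matrix.toBlocks₂₂ h2
      simpa [Matrix.toBlocks_fromBlocks₂₂] using this
    exact Prod.ext (Units.ext hA) (Units.ext hD)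
  · rintro ⟨g, hg⟩
    set u := ConjAct.ofConjAct g with hu
    rw [MulAction.mem_stabilizer_iff, ConjAct.units_smul_def, Units.mul_inv_eq_iff_eq_mul] at hg
    set N := re.symm u.val with hN
    have hgN : N * Matrix.fromBlocks 1 0 0 0 = Matrix.fromBlocks 1 0 0 0 * N := by
      have := congrArg re.symm hg
      rw [_root_.map_mul, _root_.map_mul, Ek_eq_reindex k hk] at this
      have h3 : re.symm (Matrix.reindexAlgEquiv F F (finSumFinEquiv.trans (finCongr (by omega) :
          Fin (k + (n - k)) ≃ Fin n)) (Matrix.fromBlocks 1 0 0 0)) = Matrix.fromBlocks 1 0 0 0 :=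
        re.symm_apply_apply _
      rw [h3] at this
      exact this
    have hB : Matrix.toBlocks₁₂ N = 0 := by
      have := congrArg Matrix.toBlocks₁₂ hgN
      rw [← Matrix.fromBlocks_toBlocks N, Matrix.fromBlocks_multiply,
        Matrix.fromBlocks_multiply] at this
      simpa [Matrix.toBlocks_fromBlocks₁₂] using this.symm
    have hC : Matrix.toBlocks₂₁ N = 0 := by
      have := congrArg Matrix.toBlocks₂₁ hgN
      rw [← Matrix.fromBlocks_toBlocks N, Matrix.fromBlocks_multiply,
        Matrix.fromBlocks_multiply] at this
      simpa [Matrix.toBlocks_fromBlocks₂₁] using this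
    have hNblocks : N = Matrix.fromBlocks (Matrix.toBlocks₁₁ N) 0 0 (Matrix.toBlocks₂₂ N) := by
      conv_lhs => rw [← Matrix.fromBlocks_toBlocks N, hB, hC]
    have hdet : IsUnit N.det := by
      have : IsUnit N := ⟨Units.map re.symm.toAlgHom.toRingHom.toMonoidHom u, rfl⟩
      exact (Matrix.isUnit_iff_isUnit_det N).mp this
    have hdet2 : IsUnit ((Matrix.toBlocks₁₁ N).det * (Matrix.toBlocks₂₂ N).det) := by
      rwa [hNblocks, Matrix.det_fromBlocks_zero₂₁] at hdet
    have hA : IsUnit (Matrix.toBlocks₁₁ N) :=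
      (Matrix.isUnit_iff_isUnit_det _).mpr (isUnit_of_mul_isUnit_left hdet2)
    have hD : IsUnit (Matrix.toBlocks₂₂ N) :=
      (Matrix.isUnit_iff_isUnit_det _).mpr (isUnit_of_mul_isUnit_right hdet2)
    refine ⟨(hA.unit, hD.unit), ?_⟩
    apply Subtype.ext
    apply (MulEquiv.apply_eq_iff_eq ConjAct.ofConjAct).mp
    rw [ConjAct.ofConjAct_toConjAct]
    apply Units.ext
    show re (Matrix.fromBlocks hA.unit.val 0 0 hD.unit.val) = u.val
    rw [IsUnit.unit_spec, IsUnit.unit_spec, ← hNblocks, hN]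
    simp

theorem rank_conj (u : (Matrix (Fin n) (Fin n) F)ˣ) (P : Matrix (Fin n) (Fin n) F) :
    ((u : Matrix (Fin n) (Fin n) F) * P * ((u⁻¹ : _) : Matrix (Fin n) (Fin n) F)).rank
      = P.rank := by
  classical
  rw [Matrix.rank_mul_eq_left_of_isUnit_det _ _ ?h1,
    Matrix.rank_mul_eq_right_of_isUnit_det _ _ ?h2]
  case h1 => exact (Matrix.isUnit_iff_isUnit_det _).mp (u⁻¹).isUnit
  case h2 => exact (Matrix.isUnit_iff_isUnit_det _).mp u.isUnit

theorem orbit_eq (k : ℕ) (hk : k ≤ n) :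
    {P : Matrix (Fin n) (Fin n) F | P * P = P ∧ P.rank = k} =
      MulAction.orbit (ConjAct (Matrix (Fin n) (Fin n) F)ˣ) (Ek F n k) := by
  classical
  ext P
  constructor
  · rintro ⟨h1, h2⟩
    obtain ⟨j, hj, u, hu⟩ := idem_conj P h1
    have hjk : j = k := by rw [← h2, hu, rank_conj, rank_Ek j hj]
    subst hjk
    refine ⟨ConjAct.toConjAct u, ?_⟩
    show ConjAct.toConjAct u • Ek F n j = P
    rw [ConjAct.units_smul_def, ConjAct.ofConjAct_toConjAct, hu]
  · rintro ⟨g, rfl⟩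
    show (g • Ek F n k) * (g • Ek F n k) = g • Ek F n k ∧ (g • Ek F n k).rank = k
    rw [ConjAct.units_smul_def]
    set u := ConjAct.ofConjAct g
    have hE : Ek F n k * Ek F n k = Ek F n k := by
      rw [Ek, Matrix.diagonal_mul_diagonal]
      have : (fun i : Fin n => (if (i:ℕ) < k then (1:F) else 0) * if (i:ℕ) < k then 1 else 0)
          = (fun i : Fin n => if (i:ℕ) < k then (1:F) else 0) := by
        funext i; split <;> simp
      rw [this]
    refine ⟨?_, ?_⟩
    · calc (↑u * Ek F n k * ↑u⁻¹) * (↑u * Ek F n k * ↑u⁻¹)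
          = ↑u * Ek F n k * (↑u⁻¹ * ↑u) * Ek F n k * ↑u⁻¹ := by
            simp only [Matrix.mul_assoc]
        _ = ↑u * Ek F n k * ↑u⁻¹ := by
            rw [Units.inv_mul]
            simp only [Matrix.mul_one, Matrix.mul_assoc, hE]
    · rw [rank_conj, rank_Ek k hk]

theorem card_GL_eq (ℓ : ℕ) : Nat.card (GL (Fin ℓ) F) = glOrder (Fintype.card F) ℓ := by
  rw [Matrix.card_GL_field, glOrder,
    Fin.prod_univ_eq_prod_range (fun i => Fintype.card F ^ ℓ - Fintype.card F ^ i) ℓ]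

theorem orbit_stab (k : ℕ) (hk : k ≤ n) :
    Nat.card (MulAction.orbit (ConjAct (Matrix (Fin n) (Fin n) F)ˣ) (Ek F n k)) *
      (glOrder (Fintype.card F) k * glOrder (Fintype.card F) (n - k)) =
      glOrder (Fintype.card F) n := by
  classical
  rw [← card_GL_eq, ← card_GL_eq, ← card_GL_eq (F := F) n, ← card_stab k hk]
  rw [← Nat.card_prod]
  rw [Nat.card_congr (MulAction.orbitProdStabilizerEquivGroup
    (ConjAct (Matrix (Fin n) (Fin n) F)ˣ) (Ek F n k))]
  exact Nat.card_congr ConjAct.ofConjAct.toEquiv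

theorem card_idem :
    Nat.card {P : Matrix (Fin n) (Fin n) F | P * P = P} =
      ∑ k ∈ Finset.range (n + 1),
        Nat.card (MulAction.orbit (ConjAct (Matrix (Fin n) (Fin n) F)ˣ) (Ek F n k)) := by
  classical
  set S : Set (Matrix (Fin n) (Fin n) F) := {P | P * P = P} with hS
  have hSfin : S.Finite := Set.toFinite S
  rw [Nat.card_coe_set_eq, Set.ncard_eq_toFinset_card S hSfin]
  have hrank : ∀ P ∈ hSfin.toFinset, Matrix.rank P ∈ Finset.range (n + 1) := by
    intro P _
    rw [Finset.mem_range, Nat.lt_succ_iff]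
    exact (Matrix.rank_le_card_width P).trans (by simp)
  rw [Finset.card_eq_sum_card_fiberwise hrank]
  apply Finset.sum_congr rfl
  intro k hk
  rw [Finset.mem_range, Nat.lt_succ_iff] at hk
  have horb : (MulAction.orbit (ConjAct (Matrix (Fin n) (Fin n) F)ˣ) (Ek F n k)).Finite :=
    Set.toFinite _
  rw [Nat.card_coe_set_eq, Set.ncard_eq_toFinset_card _ horb]
  congr 1
  ext P
  simp only [Finset.mem_filter, Set.Finite.mem_toFinset, hS, Set.mem_setOf_eq]
  rw [← orbit_eq k hk]
  simp

theorem glOrder_pos {q : ℕ} (hq : 1 < q) (ℓ : ℕ) : 0 < glOrder q ℓ :=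
  Finset.prod_pos fun i hi =>
    Nat.sub_pos_of_lt (Nat.pow_lt_pow_right hq (Finset.mem_range.mp hi))

theorem card_scaled (a : F) (ha : a ≠ 0) :
    Nat.card {X : Matrix (Fin n) (Fin n) F | X * X = a • X} =
      Nat.card {P : Matrix (Fin n) (Fin n) F | P * P = P} := by
  apply Nat.card_congr
  refine ⟨fun X => ⟨a⁻¹ • X.1, ?_⟩, fun P => ⟨a • P.1, ?_⟩, ?_, ?_⟩
  · have hX := X.2
    simp only [Set.mem_setOf_eq] at hX ⊢
    rw [Matrix.smul_mul, Matrix.mul_smul, hX, smul_smul, smul_smul]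
    congr 1
    field_simp
  · have hP := P.2
    simp only [Set.mem_setOf_eq] at hP ⊢
    rw [Matrix.smul_mul, Matrix.mul_smul, hP, smul_smul]
  · intro X; apply Subtype.ext; simp [smul_smul, ha]
  · intro P; apply Subtype.ext; simp [smul_smul, ha]

end Stmt10Aux

theorem sum_arith (c t : ℕ → ℕ) (m : ℕ) (hm : 1 ≤ m) (hc0 : c 0 = 1) (hcn : c (2*m+1) = 1)
    (h1 : ∀ j, j < m → c (j+1) = t (j+1)) (h2 : ∀ j, j < m → c (m+j+1) = t (m-j)) :
    ∑ k ∈ Finset.range (2*m+1+1), c k = 2 + ∑ k ∈ Finset.Icc 1 m, 2 * t k := by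
  rw [Finset.sum_range_succ, Finset.sum_range_succ', hc0, hcn,
    show 2*m = m + m by omega, Finset.sum_range_add]
  rw [Finset.sum_congr rfl (fun j hj => h1 j (Finset.mem_range.mp hj))]
  rw [Finset.sum_congr rfl (fun j (hj : j ∈ Finset.range m) => h2 j (Finset.mem_range.mp hj))]
  rw [Finset.sum_congr rfl (fun j (hj : j ∈ Finset.range m) =>
    show t (m - j) = t (m - 1 - j + 1) from by
      have := Finset.mem_range.mp hj; congr 1; omega)]
  rw [Finset.sum_range_reflect (fun j => t (j+1)) m]
  rw [show Finset.Icc 1 m = Finset.Ico 1 (m+1) from by rw [Finset.Ico_add_one_right_eq_Icc],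
    Finset.sum_Ico_eq_sum_range, show m + 1 - 1 = m from rfl]
  rw [Finset.sum_congr rfl (fun j (hj : j ∈ Finset.range m) =>
    show 2 * t (1 + j) = t (j+1) + t (j+1) from by rw [two_mul, show 1 + j = j + 1 by omega])]
  rw [← Finset.sum_add_distrib]
  omega

theorem stmt_10 (F : Type*) [Field F] [Fintype F] (a : F) (ha : a ≠ 0) (m : ℕ) (hm : 1 ≤ m)
    (q : ℕ) (hq : q = Fintype.card F) :
    (∀ k ∈ Finset.Icc 1 m,
        glOrder q (2 * m - k + 1) * glOrder q k ∣ glOrder q (2 * m + 1)) ∧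
    Nat.card {X : Matrix (Fin (2 * m + 1)) (Fin (2 * m + 1)) F | X * X = a • X} =
      2 + ∑ k ∈ Finset.Icc 1 m,
          2 * (glOrder q (2 * m + 1) / (glOrder q (2 * m - k + 1) * glOrder q k)) := by
  classical
  subst hq
  set q := Fintype.card F with hq
  set n := 2 * m + 1 with hn
  have hq2 : 1 < q := Fintype.one_lt_card
  have hpos : ∀ ℓ, 0 < glOrder q ℓ := Stmt10Aux.glOrder_pos hq2
  have hg0 : glOrder q 0 = 1 := by simp [glOrder]
  have hcs : ∀ k, k ≤ n →
      Nat.card (MulAction.orbit (ConjAct (Matrix (Fin n) (Fin n) F)ˣ) (Stmt10Aux.Ek F n k)) *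
        (glOrder q k * glOrder q (n - k)) = glOrder q n :=
    fun k hk => Stmt10Aux.orbit_stab k hk
  have hcv : ∀ j, j ≤ n →
      Nat.card (MulAction.orbit (ConjAct (Matrix (Fin n) (Fin n) F)ˣ) (Stmt10Aux.Ek F n j)) =
        glOrder q n / (glOrder q j * glOrder q (n - j)) := by
    intro j hj
    exact (Nat.div_eq_of_eq_mul_left (Nat.mul_pos (hpos _) (hpos _)) (hcs j hj).symm).symm
  constructor
  · intro k hk
    rw [Finset.mem_Icc] at hk
    rw [show 2 * m - k + 1 = n - k by omega]
    refine ⟨Nat.card (MulAction.orbit (ConjAct (Matrix (Fin n) (Fin n) F)ˣ)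
      (Stmt10Aux.Ek F n k)), ?_⟩
    rw [← hcs k (by omega)]
    ring
  · rw [Stmt10Aux.card_scaled a ha, Stmt10Aux.card_idem]
    refine sum_arith
      (fun k => Nat.card (MulAction.orbit (ConjAct (Matrix (Fin n) (Fin n) F)ˣ)
        (Stmt10Aux.Ek F n k)))
      (fun k => glOrder q (2 * m + 1) / (glOrder q (2 * m - k + 1) * glOrder q k))
      m hm ?_ ?_ ?_ ?_
    · show Nat.card (MulAction.orbit (ConjAct (Matrix (Fin n) (Fin n) F)ˣ)
        (Stmt10Aux.Ek F n 0)) = 1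
      rw [hcv 0 (by omega), Nat.sub_zero, hg0, one_mul, Nat.div_self (hpos n)]
    · show Nat.card (MulAction.orbit (ConjAct (Matrix (Fin n) (Fin n) F)ˣ)
        (Stmt10Aux.Ek F n (2 * m + 1))) = 1
      rw [hcv (2 * m + 1) (by omega), show n - (2 * m + 1) = 0 from by omega, hg0, mul_one,
        Nat.div_self (hpos n)]
    · intro j hj
      show Nat.card (MulAction.orbit (ConjAct (Matrix (Fin n) (Fin n) F)ˣ)
          (Stmt10Aux.Ek F n (j + 1))) =
        glOrder q (2 * m + 1) / (glOrder q (2 * m - (j + 1) + 1) * glOrder q (j + 1))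
      rw [hcv (j + 1) (by omega), Nat.mul_comm,
        show n - (j + 1) = 2 * m - (j + 1) + 1 from by omega]
    · intro j hj
      show Nat.card (MulAction.orbit (ConjAct (Matrix (Fin n) (Fin n) F)ˣ)
          (Stmt10Aux.Ek F n (m + j + 1))) =
        glOrder q (2 * m + 1) / (glOrder q (2 * m - (m - j) + 1) * glOrder q (m - j))
      rw [hcv (m + j + 1) (by omega), show n - (m + j + 1) = m - j from by omega,
        show 2 * m - (m - j) + 1 = m + j + 1 from by omega]
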